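/- Let r be a directed graph on a vertex type V and let V1, V2 be vertex sets. Given a finite set P of pairwise vertex-disjoint paths from V1 to V2, there exists a set P_new of pairwise vertex-disjoint paths from V1 to V2 with |P_new| = |P| such that every internal vertex of every path in P_new lies outside V1 ∪ V2. -/
import Mathlib


/-- A path in a directed graph `r`: a nonempty duplicate-free list of vertices
in which every pair of consecutive entries is related by `r`. -/
def IsPath {V : Type*} (r : V → V → Prop) (l : List V) : Prop :=
  l ≠ [] ∧ l.Nodup ∧ l.Chain' r

/-- A path from the vertex set `V1` to the vertex set `V2`. -/
def IsPathFromTo {V : Type*} (r : V → V → Prop) (V1 V2 : Set V) (l : List V) : Prop :=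
  IsPath r l ∧ ∀ h : l ≠ [], l.head h ∈ V1 ∧ l.getLast h ∈ V2

private lemma shorten_key {V : Type*} (r : V → V → Prop) (V1 V2 : Set V) :
    ∀ (n : ℕ) (l : List V), l.length ≤ n → IsPathFromTo r V1 V2 l →
      ∃ l', IsPathFromTo r V1 V2 l' ∧ (∀ v ∈ l', v ∈ l) ∧
        ∀ v ∈ l'.tail.dropLast, v ∉ V1 ∪ V2 := by
  intro n
  induction n with
  | zero =>
    intro l hlen hl
    exact absurd (List.length_eq_zero_iff.mp (Nat.le_zero.mp hlen)) hl.1.1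
  | succ n ih =>
    intro l hlen hl
    by_cases hint : ∀ v ∈ l.tail.dropLast, v ∉ V1 ∪ V2
    · exact ⟨l, hl, fun v hv => hv, hint⟩
    · push_neg at hint
      obtain ⟨v, hv, hvV⟩ := hint
      have hvl : v ∈ l := List.mem_of_mem_tail (List.mem_of_mem_dropLast hv)
      obtain ⟨s, t, hst⟩ := List.append_of_mem hvl
      subst hst
      have hnd : (s ++ v :: t).Nodup := hl.1.2.1
      rcases hvV with hv1 | hv2
      · -- v ∈ V1 : take the suffix v :: t
        have hs : s ≠ [] := by
          rintro rfl
          simp only [List.nil_append] at hv hnd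
          exact (List.nodup_cons.mp hnd).1 (List.mem_of_mem_dropLast hv)
        have hne : (v :: t : List V) ≠ [] := by simp
        have hlen' : (v :: t).length ≤ n := by
          have := hlen
          simp only [List.length_append, List.length_cons] at this ⊢
          have : 1 ≤ s.length := List.length_pos_iff.mpr hs
          omega
        have hpath' : IsPathFromTo r V1 V2 (v :: t) := by
          refine ⟨⟨hne, hnd.of_append_right, hl.1.2.2.suffix ⟨s, rfl⟩⟩, fun h => ?_⟩
          constructor
          · simpa using hv1
          · have := (hl.2 (by simp)).2
            rwa [List.getLast_append (l := s) (l' := v :: t), dif_neg (by simp)] at this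
        obtain ⟨l', h1, h2, h3⟩ := ih (v :: t) hlen' hpath'
        exact ⟨l', h1, fun w hw => by simpa using Or.inr (h2 w hw), h3⟩
      · -- v ∈ V2 : take the prefix s ++ [v]
        have ht : t ≠ [] := by
          rintro rfl
          have hv' : v ∈ (s ++ [v]).dropLast.tail := by rw [List.tail_dropLast]; exact hv
          rw [List.dropLast_concat] at hv'
          have : v ∉ s := by
            have := List.disjoint_of_nodup_append hnd
            exact fun hm => this hm (by simp)
          exact this (List.mem_of_mem_tail hv')
        have hne : (s ++ [v] : List V) ≠ [] := by simp
        have hlen' : (s ++ [v]).length ≤ n := by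
          simp only [List.length_append, List.length_cons] at hlen ⊢
          have : 1 ≤ t.length := List.length_pos_iff.mpr ht
          simp only [List.length_nil]
          omega
        have hpref : (s ++ [v]) <+: s ++ v :: t := ⟨t, by simp⟩
        have hpath' : IsPathFromTo r V1 V2 (s ++ [v]) := by
          refine ⟨⟨hne, hnd.sublist hpref.sublist, hl.1.2.2.prefix hpref⟩, fun h => ?_⟩
          constructor
          · have := (hl.2 (by simp)).1
            rw [List.head_append] at this ⊢
            by_cases hs : s = [] <;> simp [hs] at this ⊢ <;> exact this
          · rw [List.getLast_concat]; exact hv2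
        obtain ⟨l', h1, h2, h3⟩ := ih (s ++ [v]) hlen' hpath'
        refine ⟨l', h1, fun w hw => ?_, h3⟩
        have := h2 w hw
        simp only [List.mem_append, List.mem_singleton, List.mem_cons] at this ⊢
        tauto

theorem stmt7 {V : Type*} (r : V → V → Prop) (V1 V2 : Set V)
    (P : Finset (List V))
    (hpath : ∀ l ∈ P, IsPathFromTo r V1 V2 l)
    (hdisj : ∀ l₁ ∈ P, ∀ l₂ ∈ P, l₁ ≠ l₂ → ∀ v ∈ l₁, v ∉ l₂) :
    ∃ Pnew : Finset (List V),
      Pnew.card = P.card ∧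
      (∀ l ∈ Pnew, IsPathFromTo r V1 V2 l) ∧
      (∀ l₁ ∈ Pnew, ∀ l₂ ∈ Pnew, l₁ ≠ l₂ → ∀ v ∈ l₁, v ∉ l₂) ∧
      (∀ l ∈ Pnew, ∀ v ∈ l.tail.dropLast, v ∉ V1 ∪ V2) := by
  classical
  have key : ∀ l ∈ P, ∃ l', IsPathFromTo r V1 V2 l' ∧ (∀ v ∈ l', v ∈ l) ∧
      ∀ v ∈ l'.tail.dropLast, v ∉ V1 ∪ V2 :=
    fun l hl => shorten_key r V1 V2 l.length l le_rfl (hpath l hl)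
  choose f hf1 hf2 hf3 using key
  refine ⟨P.attach.image (fun x => f x.1 x.2), ?_, ?_, ?_, ?_⟩
  · rw [Finset.card_image_of_injOn, Finset.card_attach]
    rintro ⟨l₁, h₁⟩ - ⟨l₂, h₂⟩ - heq
    by_contra hne
    have hne' : l₁ ≠ l₂ := by simpa using hne
    have hfne : f l₁ h₁ ≠ [] := (hf1 l₁ h₁).1.1
    obtain ⟨v, hv⟩ := List.exists_mem_of_ne_nil _ hfne
    have hv1 : v ∈ l₁ := hf2 l₁ h₁ v hv
    have heq' : f l₁ h₁ = f l₂ h₂ := heq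
    have hv2 : v ∈ l₂ := hf2 l₂ h₂ v (heq' ▸ hv)
    exact hdisj l₁ h₁ l₂ h₂ hne' v hv1 hv2
  · rintro l hl
    obtain ⟨⟨l₀, h₀⟩, -, rfl⟩ := Finset.mem_image.mp hl
    exact hf1 l₀ h₀
  · rintro m₁ hm₁ m₂ hm₂ hne v hv1 hv2
    obtain ⟨⟨l₁, h₁⟩, -, rfl⟩ := Finset.mem_image.mp hm₁
    obtain ⟨⟨l₂, h₂⟩, -, rfl⟩ := Finset.mem_image.mp hm₂
    have hne' : l₁ ≠ l₂ := by rintro rfl; exact hne rfl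
    exact hdisj l₁ h₁ l₂ h₂ hne' v (hf2 l₁ h₁ v hv1) (hf2 l₂ h₂ v hv2)
  · rintro l hl
    obtain ⟨⟨l₀, h₀⟩, -, rfl⟩ := Finset.mem_image.mp hl
    exact hf3 l₀ h₀
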